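/- Let a_n = (1/n)·binomial(3n-2, n-1) for n ≥ 1 and t_n = (1/(2n+1))·binomial(3n, n) for n ≥ 0. Then for all n ≥ 1, a_n = sum over i + j = n - 1 of t_i · t_j. -/

import Mathlib

/-- Raney number as a rational: `fr a n = (a/(a+3n)) * C(a+3n, n)`, with `fr a 0 = 1`. -/
def fr (a n : ℕ) : ℚ := if n = 0 then 1 else ((a : ℚ) / (a + 3 * n)) * (Nat.choose (a + 3 * n) n : ℚ)

lemma fr_zero_right (a : ℕ) : fr a 0 = 1 := by simp [fr]

lemma fr_zero_left (k : ℕ) (hk : k ≠ 0) : fr 0 k = 0 := by simp [fr, hk]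

lemma fr_eq (a n : ℕ) (ha : 1 ≤ a) :
    fr a n = ((a : ℚ) / (a + 3 * n)) * (Nat.choose (a + 3 * n) n : ℚ) := by
  rcases Nat.eq_zero_or_pos n with rfl | h
  · have ha' : (a : ℚ) ≠ 0 := by exact_mod_cast Nat.one_le_iff_ne_zero.mp ha
    simp [fr, div_self ha']
  · simp [fr, Nat.one_le_iff_ne_zero.mp h]

lemma frec (a n : ℕ) : fr (a + 1) (n + 1) = fr a (n + 1) + fr (a + 3) n := by
  have e1 : fr (a + 1) (n + 1)
      = (((a : ℚ) + 1) / ((a : ℚ) + 3 * n + 4)) * (Nat.choose (a + 3 * n + 4) (n + 1) : ℚ) := by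
    rw [fr_eq _ _ (by omega), show a + 1 + 3 * (n + 1) = a + 3 * n + 4 by ring]
    push_cast; ring
  have e2 : fr a (n + 1)
      = ((a : ℚ) / ((a : ℚ) + 3 * n + 3)) * (Nat.choose (a + 3 * n + 3) (n + 1) : ℚ) := by
    show (if n + 1 = 0 then (1:ℚ) else _) = _
    rw [if_neg (Nat.succ_ne_zero n), show a + 3 * (n + 1) = a + 3 * n + 3 by ring]
    push_cast; ring
  have e3 : fr (a + 3) n
      = (((a : ℚ) + 3) / ((a : ℚ) + 3 * n + 3)) * (Nat.choose (a + 3 * n + 3) n : ℚ) := by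
    rw [fr_eq _ _ (by omega), show a + 3 + 3 * n = a + 3 * n + 3 by ring]
    push_cast; ring
  rw [e1, e2, e3]
  have hsucc : (Nat.choose (a + 3 * n + 4) (n + 1) : ℚ)
      = (Nat.choose (a + 3 * n + 3) n : ℚ) + (Nat.choose (a + 3 * n + 3) (n + 1) : ℚ) := by
    rw [show a + 3 * n + 4 = (a + 3 * n + 3) + 1 from rfl]
    exact_mod_cast congrArg (Nat.cast : ℕ → ℚ) (Nat.choose_succ_succ (a + 3 * n + 3) n)
  have key : (Nat.choose (a + 3 * n + 3) (n + 1) : ℚ) * ((n : ℚ) + 1)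
      = (Nat.choose (a + 3 * n + 3) n : ℚ) * ((a : ℚ) + 2 * n + 3) := by
    have h := Nat.choose_succ_right_eq (a + 3 * n + 3) n
    rw [show a + 3 * n + 3 - n = a + 2 * n + 3 by omega] at h
    exact_mod_cast congrArg (Nat.cast : ℕ → ℚ) h
  have hd1 : ((a : ℚ) + 3 * n + 4) ≠ 0 := by positivity
  have hd2 : ((a : ℚ) + 3 * n + 3) ≠ 0 := by positivity
  have hn1 : ((n : ℚ) + 1) ≠ 0 := by positivity
  rw [hsucc]
  field_simp
  linear_combination (3 : ℚ) * key

lemma conv : ∀ n a c : ℕ,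
    ∑ i ∈ Finset.range (n + 1), fr a i * fr c (n - i) = fr (a + c) n := by
  intro n
  induction n with
  | zero => intro a c; simp [fr_zero_right]
  | succ m ih =>
    intro a c
    induction a with
    | zero =>
      rw [Finset.sum_eq_single 0]
      · simp [fr_zero_right]
      · intro i _ hi; rw [fr_zero_left i hi, zero_mul]
      · intro h; simp at h
    | succ a iha =>
      have hpt : ∀ i, fr (a + 1) i = fr a i + (if i = 0 then 0 else fr (a + 3) (i - 1)) := by
        intro i
        cases i with
        | zero => simp [fr_zero_right]
        | succ k => simpa using frec a k
      calc ∑ i ∈ Finset.range (m + 2), fr (a + 1) i * fr c (m + 1 - i)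
          = ∑ i ∈ Finset.range (m + 2), (fr a i * fr c (m + 1 - i)
              + (if i = 0 then 0 else fr (a + 3) (i - 1)) * fr c (m + 1 - i)) := by
            refine Finset.sum_congr rfl fun i _ => ?_
            rw [hpt]; ring
        _ = fr (a + c) (m + 1)
              + ∑ i ∈ Finset.range (m + 2),
                  (if i = 0 then 0 else fr (a + 3) (i - 1)) * fr c (m + 1 - i) := by
            rw [Finset.sum_add_distrib, iha]
        _ = fr (a + c) (m + 1) + ∑ i ∈ Finset.range (m + 1), fr (a + 3) i * fr c (m - i) := by
            congr 1
            rw [Finset.sum_range_succ']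
            simp
        _ = fr (a + c) (m + 1) + fr (a + 3 + c) m := by rw [ih]
        _ = fr (a + 1 + c) (m + 1) := by
            rw [show a + 1 + c = (a + c) + 1 by ring, frec (a + c) m,
              show a + 3 + c = (a + c) + 3 by ring]

theorem a_eq_conv_ternary (n : ℕ) (hn : 1 ≤ n) :
    (1 / (n : ℚ)) * (Nat.choose (3 * n - 2) (n - 1) : ℚ)
      = ∑ p ∈ Finset.HasAntidiagonal.antidiagonal (n - 1),
          ((1 / (2 * (p.1 : ℚ) + 1)) * (Nat.choose (3 * p.1) p.1 : ℚ))
            * ((1 / (2 * (p.2 : ℚ) + 1)) * (Nat.choose (3 * p.2) p.2 : ℚ)) := by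
  obtain ⟨m, rfl⟩ : ∃ m, n = m + 1 := ⟨n - 1, by omega⟩
  have ht : ∀ i : ℕ, (1 / (2 * (i : ℚ) + 1)) * (Nat.choose (3 * i) i : ℚ) = fr 1 i := by
    intro i
    rw [fr_eq 1 i le_rfl]
    have h := Nat.choose_mul_succ_eq (3 * i) i
    rw [show 3 * i + 1 - i = 2 * i + 1 by omega] at h
    have hq : (Nat.choose (3 * i) i : ℚ) * (3 * (i : ℚ) + 1)
        = (Nat.choose (3 * i + 1) i : ℚ) * (2 * (i : ℚ) + 1) := by exact_mod_cast h
    have hd1 : (2 * (i : ℚ) + 1) ≠ 0 := by positivity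
    have hd2 : ((1 : ℚ) + 3 * i) ≠ 0 := by positivity
    rw [show (1 : ℕ) + 3 * i = 3 * i + 1 by ring]
    push_cast
    field_simp
    linear_combination hq
  have hL : (1 / ((m : ℚ) + 1)) * (Nat.choose (3 * m + 1) m : ℚ) = fr 2 m := by
    rw [fr_eq 2 m (by norm_num)]
    have h := Nat.choose_mul_succ_eq (3 * m + 1) m
    rw [show 3 * m + 1 + 1 - m = 2 * m + 2 by omega] at h
    have hq : (Nat.choose (3 * m + 1) m : ℚ) * (3 * (m : ℚ) + 2)
        = (Nat.choose (3 * m + 2) m : ℚ) * (2 * (m : ℚ) + 2) := by exact_mod_cast h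
    have hd1 : ((m : ℚ) + 1) ≠ 0 := by positivity
    have hd2 : ((2 : ℚ) + 3 * m) ≠ 0 := by positivity
    rw [show (2 : ℕ) + 3 * m = 3 * m + 2 by ring]
    push_cast
    field_simp
    linear_combination hq
  rw [show 3 * (m + 1) - 2 = 3 * m + 1 by omega, show m + 1 - 1 = m by omega]
  push_cast
  rw [hL, Finset.Nat.sum_antidiagonal_eq_sum_range_succ_mk]
  rw [← conv m 1 1]
  refine Finset.sum_congr rfl fun i _ => ?_
  rw [ht, ht]
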